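/- arXiv:2506.08373 — 2 statements merged into one kernel-verified Lean document; each statement's English description precedes it below -/
import Mathlib

section
/- Let M, M̂ ∈ ℝ^{n×n} and let A, Â ∈ ℝ^{n×n} be obtained by applying the softmax map to each row of M and M̂ respectively. Suppose every entry of A and of Â is at least m > 0. Then there exists a vector c ∈ ℝⁿ such that ‖M − M̂ − c𝟏ᵀ‖₂ ≤ (√n / m) ‖A − Â‖₂, where c𝟏ᵀ is the rank-one matrix whose (i,j) entry is c_i, 𝟏 ∈ ℝⁿ is the all-ones vector, and ‖·‖₂ denotes the spectral norm (the operator norm induced by the Euclidean norm). -/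
open scoped BigOperators ENNReal

/-- Softmax map on `ℝⁿ`. -/
noncomputable def softmax {n : ℕ} (x : Fin n → ℝ) : Fin n → ℝ :=
  fun i => Real.exp (x i) / ∑ j, Real.exp (x j)

/-- Euclidean norm on `ℝⁿ`. -/
noncomputable def l2norm {n : ℕ} (x : Fin n → ℝ) : ℝ :=
  Real.sqrt (∑ i, x i ^ 2)

/-- Supremum norm on `ℝⁿ`. -/
noncomputable def linftyNorm {n : ℕ} (x : Fin n → ℝ) : ℝ :=
  ⨆ i, |x i|

/-- Spectral norm (operator norm w.r.t. Euclidean norms) of a real matrix. -/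
noncomputable def matSpectralNorm {m n : ℕ} (A : Matrix (Fin m) (Fin n) ℝ) : ℝ :=
  sSup { r | ∃ x : Fin n → ℝ, l2norm x ≤ 1 ∧ r = l2norm (A.mulVec x) }

/-- Smallest singular value of a square real matrix. -/
noncomputable def sigmaMin {d : ℕ} (W : Matrix (Fin d) (Fin d) ℝ) : ℝ :=
  sInf { r | ∃ x : Fin d → ℝ, l2norm x = 1 ∧ r = l2norm (W.mulVec x) }

/-- `‖X‖_{∞,2}`: the maximum Euclidean norm of a row of `X`. -/
noncomputable def maxRowNorm {n d : ℕ} (X : Matrix (Fin n) (Fin d) ℝ) : ℝ :=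
  ⨆ i, l2norm (X i)

noncomputable def frobNorm {a b : ℕ} (B : Matrix (Fin a) (Fin b) ℝ) : ℝ :=
  Real.sqrt (∑ i, ∑ j, B i j ^ 2)

lemma l2norm_nonneg {n : ℕ} (x : Fin n → ℝ) : 0 ≤ l2norm x := Real.sqrt_nonneg _

lemma frobNorm_nonneg {a b : ℕ} (B : Matrix (Fin a) (Fin b) ℝ) : 0 ≤ frobNorm B :=
  Real.sqrt_nonneg _

lemma l2norm_mulVec_le {a b : ℕ} (B : Matrix (Fin a) (Fin b) ℝ) (x : Fin b → ℝ) :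
    l2norm (B.mulVec x) ≤ frobNorm B * l2norm x := by
  unfold l2norm frobNorm
  rw [← Real.sqrt_mul (by positivity)]
  apply Real.sqrt_le_sqrt
  calc ∑ i, (B.mulVec x i) ^ 2
      ≤ ∑ i, ((∑ j, B i j ^ 2) * ∑ j, x j ^ 2) := by
        refine Finset.sum_le_sum fun i _ => ?_
        simpa [Matrix.mulVec, dotProduct] using
          Finset.sum_mul_sq_le_sq_mul_sq Finset.univ (fun j => B i j) x
    _ = (∑ i, ∑ j, B i j ^ 2) * ∑ j, x j ^ 2 := by rw [Finset.sum_mul]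

lemma spectral_bddAbove {a b : ℕ} (B : Matrix (Fin a) (Fin b) ℝ) :
    BddAbove { r | ∃ x : Fin b → ℝ, l2norm x ≤ 1 ∧ r = l2norm (B.mulVec x) } := by
  refine ⟨frobNorm B, fun r hr => ?_⟩
  obtain ⟨x, hx, rfl⟩ := hr
  calc l2norm (B.mulVec x) ≤ frobNorm B * l2norm x := l2norm_mulVec_le B x
    _ ≤ frobNorm B * 1 := by
        exact mul_le_mul_of_nonneg_left hx (frobNorm_nonneg B)
    _ = frobNorm B := mul_one _

lemma zero_mem_spectral_set {a b : ℕ} (B : Matrix (Fin a) (Fin b) ℝ) :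
    (0 : ℝ) ∈ { r | ∃ x : Fin b → ℝ, l2norm x ≤ 1 ∧ r = l2norm (B.mulVec x) } :=
  ⟨0, by simp [l2norm], by simp [l2norm]⟩

lemma matSpectralNorm_nonneg {a b : ℕ} (B : Matrix (Fin a) (Fin b) ℝ) :
    0 ≤ matSpectralNorm B :=
  le_csSup (spectral_bddAbove B) (zero_mem_spectral_set B)

lemma spectral_le_frob {a b : ℕ} (B : Matrix (Fin a) (Fin b) ℝ) :
    matSpectralNorm B ≤ frobNorm B := by
  refine csSup_le ⟨0, zero_mem_spectral_set B⟩ fun r hr => ?_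
  obtain ⟨x, hx, rfl⟩ := hr
  calc l2norm (B.mulVec x) ≤ frobNorm B * l2norm x := l2norm_mulVec_le B x
    _ ≤ frobNorm B * 1 := mul_le_mul_of_nonneg_left hx (frobNorm_nonneg B)
    _ = frobNorm B := mul_one _

lemma frob_le_sqrt_mul_spectral {a : ℕ} (E : Matrix (Fin a) (Fin a) ℝ) :
    frobNorm E ≤ Real.sqrt a * matSpectralNorm E := by
  have hcol : ∀ j : Fin a, l2norm (E.mulVec (Pi.single j 1)) ≤ matSpectralNorm E := by
    intro j
    refine le_csSup (spectral_bddAbove E) ⟨Pi.single j 1, ?_, rfl⟩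
    have : l2norm (Pi.single j (1:ℝ)) = 1 := by
      unfold l2norm
      rw [Finset.sum_eq_single j]
      · simp
      · intro k _ hk; simp [Pi.single_apply, hk]
      · simp
    rw [this]
  have key : ∀ j : Fin a, ∑ i, E i j ^ 2 ≤ matSpectralNorm E ^ 2 := by
    intro j
    have h1 : E.mulVec (Pi.single j 1) = fun i => E i j := by
      funext i
      simp [Matrix.mulVec, dotProduct, Pi.single_apply]
    have h2 := hcol j
    rw [h1] at h2
    have h3 : Real.sqrt (∑ i, E i j ^ 2) ≤ matSpectralNorm E := h2
    calc ∑ i, E i j ^ 2 = Real.sqrt (∑ i, E i j ^ 2) ^ 2 := by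
          rw [Real.sq_sqrt (by positivity)]
      _ ≤ matSpectralNorm E ^ 2 := by
          exact pow_le_pow_left₀ (Real.sqrt_nonneg _) h3 2
  unfold frobNorm
  rw [Finset.sum_comm]
  calc Real.sqrt (∑ j, ∑ i, E i j ^ 2)
      ≤ Real.sqrt (∑ _j : Fin a, matSpectralNorm E ^ 2) := by
        exact Real.sqrt_le_sqrt (Finset.sum_le_sum fun j _ => key j)
    _ = Real.sqrt ((a : ℝ) * matSpectralNorm E ^ 2) := by
        rw [Finset.sum_const, Finset.card_univ, Fintype.card_fin, nsmul_eq_mul]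
    _ = Real.sqrt a * matSpectralNorm E := by
        rw [Real.sqrt_mul (by positivity), Real.sqrt_sq (matSpectralNorm_nonneg E)]

lemma log_sub_log_le {m a b : ℝ} (hm : 0 < m) (ha : m ≤ a) (hb : m ≤ b) (hba : b ≤ a) :
    Real.log a - Real.log b ≤ (a - b) / m := by
  have hb0 : 0 < b := lt_of_lt_of_le hm hb
  have ha0 : 0 < a := lt_of_lt_of_le hm ha
  rw [← Real.log_div (ne_of_gt ha0) (ne_of_gt hb0)]
  calc Real.log (a / b) ≤ a / b - 1 := Real.log_le_sub_one_of_pos (by positivity)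
    _ = (a - b) / b := by field_simp
    _ ≤ (a - b) / m := div_le_div_of_nonneg_left (by linarith) hm hb  -- check order

lemma abs_log_sub_log_le {m a b : ℝ} (hm : 0 < m) (ha : m ≤ a) (hb : m ≤ b) :
    |Real.log a - Real.log b| ≤ |a - b| / m := by
  rcases le_total b a with h | h
  · rw [abs_of_nonneg (by linarith [Real.log_le_log (lt_of_lt_of_le hm hb) h] : (0:ℝ) ≤ Real.log a - Real.log b),
      abs_of_nonneg (by linarith)]
    exact log_sub_log_le hm ha hb h
  · rw [abs_sub_comm, abs_sub_comm a b,
      abs_of_nonneg (by linarith [Real.log_le_log (lt_of_lt_of_le hm ha) h] : (0:ℝ) ≤ Real.log b - Real.log a),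
      abs_of_nonneg (by linarith)]
    exact log_sub_log_le hm hb ha h

/-- if the row-wise softmaxes `A, Â` of `M, M̂` have all entries `≥ m > 0`,
then there is `c ∈ ℝⁿ` with `‖M − M̂ − c𝟏ᵀ‖₂ ≤ (√n / m) ‖A − Â‖₂` (spectral norms). -/
theorem rowwise_inverse_softmax_bound {n : ℕ} (M Mhat : Matrix (Fin n) (Fin n) ℝ)
    (m : ℝ) (hm : 0 < m)
    (hA : ∀ i j, m ≤ softmax (M i) j)
    (hAhat : ∀ i j, m ≤ softmax (Mhat i) j) :
    ∃ c : Fin n → ℝ,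
      matSpectralNorm (M - Mhat - Matrix.of fun i _ => c i)
        ≤ (Real.sqrt n / m) *
            matSpectralNorm
              (Matrix.of (fun i => softmax (M i)) -
                Matrix.of (fun i => softmax (Mhat i))) := by
  set c : Fin n → ℝ := fun i =>
    Real.log (∑ j, Real.exp (M i j)) - Real.log (∑ j, Real.exp (Mhat i j)) with hc
  refine ⟨c, ?_⟩
  set D := M - Mhat - Matrix.of fun i _ => c i with hD
  set E := Matrix.of (fun i => softmax (M i)) - Matrix.of (fun i => softmax (Mhat i)) with hE
  have hDij : ∀ i j, D i j = Real.log (softmax (M i) j) - Real.log (softmax (Mhat i) j) := by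
    intro i j
    have hZ : (0:ℝ) < ∑ k, Real.exp (M i k) :=
      Finset.sum_pos (fun k _ => Real.exp_pos _) ⟨j, Finset.mem_univ j⟩
    have hZh : (0:ℝ) < ∑ k, Real.exp (Mhat i k) :=
      Finset.sum_pos (fun k _ => Real.exp_pos _) ⟨j, Finset.mem_univ j⟩
    have h1 : Real.log (softmax (M i) j) = M i j - Real.log (∑ k, Real.exp (M i k)) := by
      unfold softmax
      rw [Real.log_div (Real.exp_ne_zero _) (ne_of_gt hZ), Real.log_exp]
    have h2 : Real.log (softmax (Mhat i) j) = Mhat i j - Real.log (∑ k, Real.exp (Mhat i k)) := by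
      unfold softmax
      rw [Real.log_div (Real.exp_ne_zero _) (ne_of_gt hZh), Real.log_exp]
    simp only [hD, Matrix.sub_apply, Matrix.of_apply, hc, h1, h2]
    ring
  have habs : ∀ i j, |D i j| ≤ |E i j| / m := by
    intro i j
    rw [hDij i j]
    have := abs_log_sub_log_le hm (hA i j) (hAhat i j)
    simpa [hE, Matrix.sub_apply] using this
  have hsq : ∀ i j, D i j ^ 2 ≤ E i j ^ 2 / m ^ 2 := by
    intro i j
    have h := pow_le_pow_left₀ (abs_nonneg (D i j)) (habs i j) 2
    rwa [sq_abs, div_pow, sq_abs] at h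
  have hfrob : frobNorm D ≤ frobNorm E / m := by
    unfold frobNorm
    have : ∑ i, ∑ j, D i j ^ 2 ≤ (∑ i, ∑ j, E i j ^ 2) / m ^ 2 := by
      rw [Finset.sum_div]
      refine Finset.sum_le_sum fun i _ => ?_
      rw [Finset.sum_div]
      exact Finset.sum_le_sum fun j _ => hsq i j
    calc Real.sqrt (∑ i, ∑ j, D i j ^ 2)
        ≤ Real.sqrt ((∑ i, ∑ j, E i j ^ 2) / m ^ 2) := Real.sqrt_le_sqrt this
      _ = Real.sqrt (∑ i, ∑ j, E i j ^ 2) / m := by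
          rw [Real.sqrt_div (by positivity), Real.sqrt_sq hm.le]
  calc matSpectralNorm D ≤ frobNorm D := spectral_le_frob D
    _ ≤ frobNorm E / m := hfrob
    _ ≤ (Real.sqrt n * matSpectralNorm E) / m := by
        gcongr
        exact frob_le_sqrt_mul_spectral E
    _ = (Real.sqrt n / m) * matSpectralNorm E := by ring
end

section
/- Let M ∈ ℝ^{d×d} and 𝟏 ∈ ℝᵈ the all-ones vector. Then min_{c ∈ ℝᵈ} ‖M − c𝟏ᵀ‖₂ = ‖M (I_d − (1/d) 𝟏𝟏ᵀ)‖₂, and the minimum is attained at c = (1/d) M𝟏; here c𝟏ᵀ denotes the rank-one matrix whose (i,j) entry is c_i and ‖·‖₂ is the spectral norm. -/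
open scoped BigOperators ENNReal

lemma aux_mulVec_proj {d : ℕ} (x : Fin d → ℝ) (c : ℝ) :
    ((1 : Matrix (Fin d) (Fin d) ℝ) - c • Matrix.of fun _ _ => (1 : ℝ)).mulVec x
    = fun i => x i - c * ∑ j, x j := by
  funext i
  simp [Matrix.sub_mulVec, Matrix.mulVec, dotProduct, sub_mul,
    Finset.sum_sub_distrib, Matrix.one_apply, Finset.sum_ite_eq, Finset.mul_sum]

lemma aux_sumSq_proj_le {d : ℕ} (hd : 0 < d) (x : Fin d → ℝ) :
    ∑ i, (x i - (d:ℝ)⁻¹ * ∑ j, x j)^2 ≤ ∑ i, x i ^ 2 := by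
  have hd' : (d:ℝ) ≠ 0 := Nat.cast_ne_zero.mpr hd.ne'
  set s := ∑ j, x j with hs
  have h1 : ∑ i, (x i - (d:ℝ)⁻¹ * s)^2
      = ∑ i, x i ^2 - 2*(d:ℝ)⁻¹*s*s + d*((d:ℝ)⁻¹*s)^2 := by
    simp only [sub_sq]
    rw [Finset.sum_add_distrib, Finset.sum_sub_distrib, ← Finset.sum_mul]
    have e1 : ∑ i, 2 * x i = 2 * s := by rw [hs, Finset.mul_sum]
    have e2 : ∑ _i : Fin d, ((d:ℝ)⁻¹*s)^2 = (d:ℝ) * ((d:ℝ)⁻¹*s)^2 := by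
      simp [Finset.sum_const, nsmul_eq_mul]
    rw [e1, e2]; ring
  rw [h1]
  have h2 : (d:ℝ) * ((d:ℝ)⁻¹*s)^2 = (d:ℝ)⁻¹ * s^2 := by field_simp
  rw [h2]
  have : 0 ≤ (d:ℝ)⁻¹ * s^2 := by positivity
  nlinarith

lemma aux_bddAbove {m n : ℕ} (A : Matrix (Fin m) (Fin n) ℝ) :
    BddAbove { r | ∃ x : Fin n → ℝ, l2norm x ≤ 1 ∧ r = l2norm (A.mulVec x) } := by
  refine ⟨Real.sqrt (∑ i, ∑ j, A i j ^ 2), ?_⟩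
  rintro r ⟨x, hx, rfl⟩
  have hxs : ∑ j, x j ^ 2 ≤ 1 := by
    have h0 : (0:ℝ) ≤ ∑ j, x j ^ 2 := Finset.sum_nonneg fun _ _ => sq_nonneg _
    have hx' : Real.sqrt (∑ j, x j ^ 2) ≤ 1 := hx
    nlinarith [Real.sq_sqrt h0, Real.sqrt_nonneg (∑ j, x j ^ 2)]
  unfold l2norm
  apply Real.sqrt_le_sqrt
  apply Finset.sum_le_sum
  intro i _
  have hcs : (∑ j, A i j * x j)^2 ≤ (∑ j, A i j ^ 2) * (∑ j, x j ^ 2) :=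
    Finset.sum_mul_sq_le_sq_mul_sq _ _ _
  have hA : (0:ℝ) ≤ ∑ j, A i j ^ 2 := Finset.sum_nonneg fun _ _ => sq_nonneg _
  calc A.mulVec x i ^ 2 = (∑ j, A i j * x j)^2 := by
        simp [Matrix.mulVec, dotProduct]
    _ ≤ (∑ j, A i j ^ 2) * (∑ j, x j ^ 2) := hcs
    _ ≤ ∑ j, A i j ^ 2 := by nlinarith

lemma aux_matrix_eq {d : ℕ} (M : Matrix (Fin d) (Fin d) ℝ) :
    (M - Matrix.of fun i _ => (d : ℝ)⁻¹ * M.mulVec (fun _ => (1 : ℝ)) i)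
    = M * ((1 : Matrix (Fin d) (Fin d) ℝ) - (d : ℝ)⁻¹ • Matrix.of fun _ _ => (1 : ℝ)) := by
  ext i j
  simp [Matrix.mul_apply, Matrix.mulVec, dotProduct, Matrix.one_apply, mul_sub,
    Finset.sum_sub_distrib, Finset.mul_sum, mul_ite, Finset.sum_ite_eq, mul_comm,
    Finset.sum_mul]

/-- `min_{c} ‖M − c𝟏ᵀ‖₂ = ‖M(I_d − (1/d)𝟏𝟏ᵀ)‖₂`, attained at `c = (1/d) M𝟏`. -/
theorem min_rank_one_correction {d : ℕ} (M : Matrix (Fin d) (Fin d) ℝ) :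
    (∀ c : Fin d → ℝ,
      matSpectralNorm
          (M * ((1 : Matrix (Fin d) (Fin d) ℝ) - (d : ℝ)⁻¹ • Matrix.of fun _ _ => (1 : ℝ)))
        ≤ matSpectralNorm (M - Matrix.of fun i _ => c i)) ∧
    matSpectralNorm
        (M - Matrix.of fun i _ => (d : ℝ)⁻¹ * M.mulVec (fun _ => (1 : ℝ)) i)
      = matSpectralNorm
          (M * ((1 : Matrix (Fin d) (Fin d) ℝ) - (d : ℝ)⁻¹ • Matrix.of fun _ _ => (1 : ℝ))) := by
  set P : Matrix (Fin d) (Fin d) ℝ :=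
    (1 : Matrix (Fin d) (Fin d) ℝ) - (d : ℝ)⁻¹ • Matrix.of fun _ _ => (1 : ℝ) with hP
  refine ⟨fun c => ?_, congrArg matSpectralNorm (aux_matrix_eq M)⟩
  rcases Nat.eq_zero_or_pos d with hd | hd
  · subst hd
    have : M * P = M - Matrix.of fun i _ => c i := Subsingleton.elim _ _
    rw [this]
  · have hd' : (d:ℝ) ≠ 0 := Nat.cast_ne_zero.mpr hd.ne'
    apply csSup_le_csSup (aux_bddAbove _)
    · exact ⟨l2norm ((M * P).mulVec 0), 0, by simp [l2norm], rfl⟩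
    · rintro r ⟨x, hx, rfl⟩
      set y : Fin d → ℝ := fun i => x i - (d:ℝ)⁻¹ * ∑ j, x j with hy
      have hsum : ∑ j, y j = 0 := by
        simp only [hy, Finset.sum_sub_distrib, Finset.sum_const, nsmul_eq_mul]
        field_simp
        simp
      refine ⟨y, ?_, ?_⟩
      · calc l2norm y ≤ l2norm x := Real.sqrt_le_sqrt (aux_sumSq_proj_le hd x)
          _ ≤ 1 := hx
      · have h1 : (M * P).mulVec x = M.mulVec y := by
          rw [← Matrix.mulVec_mulVec, hP, aux_mulVec_proj]
        have h2 : (Matrix.of fun i _ => c i).mulVec y = 0 := by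
          funext i
          simp [Matrix.mulVec, dotProduct, ← Finset.mul_sum, hsum]
        rw [h1, Matrix.sub_mulVec, h2, sub_zero]
end
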